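/- Let X be a real Banach space and Y a closed linear subspace of X. The following statements are equivalent: (i) Y is an M-ideal in X, i.e., there exists a bounded linear projection P : X* → X* whose range is the annihilator Y^⊥ = {F ∈ X* : F(y) = 0 for all y ∈ Y} and such that ‖F‖ = ‖P(F)‖ + ‖F − P(F)‖ for all F ∈ X*; (ii) Y has the 3-ball property: for all y₁, y₂, y₃ in the unit ball B_Y of Y, all x in the unit ball B_X of X, and all ε > 0, there exists y ∈ Y such that ‖x + yᵢ − y‖ ≤ 1 + ε for i = 1, 2, 3. -/

import Mathlib

open NormedSpace

namespace MIdealAux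

variable {X : Type*} [NormedAddCommGroup X] [NormedSpace ℝ X]

/-- The 3-ball property of a subspace. -/
def ThreeBall (Y : Subspace ℝ X) : Prop :=
  ∀ y₁ y₂ y₃ : X, y₁ ∈ Y → y₂ ∈ Y → y₃ ∈ Y →
      ‖y₁‖ ≤ 1 → ‖y₂‖ ≤ 1 → ‖y₃‖ ≤ 1 →
      ∀ x : X, ‖x‖ ≤ 1 → ∀ ε > 0, ∃ y ∈ Y,
        ‖x + y₁ - y‖ ≤ 1 + ε ∧ ‖x + y₂ - y‖ ≤ 1 + ε ∧ ‖x + y₃ - y‖ ≤ 1 + ε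

lemma exists_norming {E : Type*} [NormedAddCommGroup E] [NormedSpace ℝ E]
    (h : E →L[ℝ] ℝ) {δ : ℝ} (hδ : 0 < δ) : ∃ x : E, ‖x‖ < 1 ∧ ‖h‖ - δ < h x := by
  rcases lt_or_ge (‖h‖ - δ) 0 with h0 | h0
  · exact ⟨0, by simp, by simpa using h0⟩
  · have hr : ‖h‖ - δ < ‖h‖ := by linarith
    obtain ⟨x, hx1, hx2⟩ := h.exists_lt_apply_of_lt_opNorm hr
    rcases le_or_gt 0 (h x) with hp | hp
    · exact ⟨x, hx1, by rwa [Real.norm_eq_abs, abs_of_nonneg hp] at hx2⟩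
    · refine ⟨-x, by simpa using hx1, ?_⟩
      rw [map_neg]
      rwa [Real.norm_eq_abs, abs_of_neg hp] at hx2

lemma apply_le_of_norm_le (F : X →L[ℝ] ℝ) {z : X} {r : ℝ} (hz : ‖z‖ ≤ r) :
    F z ≤ ‖F‖ * r :=
  (le_abs_self _).trans (by
    rw [← Real.norm_eq_abs]
    exact (F.le_opNorm z).trans (mul_le_mul_of_nonneg_left hz (norm_nonneg F)))

lemma neg_le_apply_of_norm_le (F : X →L[ℝ] ℝ) {z : X} {r : ℝ} (hz : ‖z‖ ≤ r) :
    -(‖F‖ * r) ≤ F z := by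
  have := apply_le_of_norm_le F (z := -z) (by simpa using hz)
  rw [map_neg] at this
  linarith

variable (Y : Subspace ℝ X)

/-- Restriction of a functional to `Y`. -/
noncomputable def res (F : StrongDual ℝ X) : StrongDual ℝ ↥Y := F.comp Y.subtypeL

@[simp] lemma res_apply (F : StrongDual ℝ X) (y : ↥Y) : res Y F y = F ↑y := rfl

/-- A choice of norm-preserving Hahn–Banach extension. -/
noncomputable def ex (f : StrongDual ℝ ↥Y) : StrongDual ℝ X := (exists_extension_norm_eq Y f).choose

lemma ex_apply (f : StrongDual ℝ ↥Y) (y : ↥Y) : ex Y f ↑y = f y :=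
  (exists_extension_norm_eq Y f).choose_spec.1 y

lemma ex_norm (f : StrongDual ℝ ↥Y) : ‖ex Y f‖ = ‖f‖ :=
  (exists_extension_norm_eq Y f).choose_spec.2

lemma res_ex (f : StrongDual ℝ ↥Y) : res Y (ex Y f) = f := by
  ext y; simp [res, ex_apply]

variable {Y}

/-- Step 1: under the 3-ball property, any norm-preserving extension `G` of
`F|_Y` satisfies `‖F - G‖ + ‖G‖ ≤ ‖F‖`. -/
lemma step1 (hb : ThreeBall Y) (F G : StrongDual ℝ X) (hext : ∀ y : ↥Y, G ↑y = F ↑y)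
    (hn : ‖G‖ = ‖res Y F‖) : ‖F - G‖ + ‖G‖ ≤ ‖F‖ := by
  apply le_of_forall_pos_le_add
  intro ε hε
  have hKpos : (0:ℝ) < ‖F‖ + ‖G‖ + 3 := by positivity
  set δ : ℝ := ε / (‖F‖ + ‖G‖ + 3) with hδdef
  have hδpos : 0 < δ := div_pos hε hKpos
  have hce : ‖F‖ * δ + ‖G‖ * δ + 3 * δ = ε := by
    have h : (‖F‖ + ‖G‖ + 3) * δ = ε := by
      rw [hδdef, mul_div_cancel₀ _ (ne_of_gt hKpos)]
    rw [← h]; ring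
  -- norming point for F - G
  obtain ⟨x, hx1, hx2⟩ := exists_norming (F - G) hδpos
  rw [ContinuousLinearMap.sub_apply] at hx2
  -- norming point for G on Y
  have hres : res Y G = res Y F := by ext y; exact hext y
  obtain ⟨u, hu1, hu2⟩ := exists_norming (res Y G) hδpos
  have hGu : ‖G‖ - δ < G ↑u := by
    rw [hn, ← hres] at *; exact hu2
  -- apply the 3-ball property with u, -u, 0
  have hun : ‖(u:X)‖ ≤ 1 := le_of_lt hu1
  obtain ⟨y, hy, h1, h2, _⟩ :=
    hb (↑u) (-↑u) 0 u.2 (Y.neg_mem u.2) Y.zero_mem hun (by simpa using hun) (by simp)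
      x (le_of_lt hx1) δ hδpos
  have hFy : F y = G y := (hext ⟨y, hy⟩).symm
  have e1 : F x + G ↑u - G y ≤ ‖F‖ + ‖F‖ * δ := by
    have hFu : F ↑u = G ↑u := (hext u).symm
    have h := apply_le_of_norm_le F h1
    rw [map_sub, map_add, hFu, hFy] at h
    linarith [h]
  have e2 : -(‖G‖ + ‖G‖ * δ) ≤ G x - G ↑u - G y := by
    have h := neg_le_apply_of_norm_le G h2
    rw [map_sub, map_add, map_neg] at h
    linarith [h]
  linarith

/-- Additivity of the extension map, via the 3-ball property. -/
lemma ex_add (hb : ThreeBall Y) (f₁ f₂ : StrongDual ℝ ↥Y) :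
    ex Y (f₁ + f₂) = ex Y f₁ + ex Y f₂ := by
  set G₁ := ex Y f₁
  set G₂ := ex Y f₂
  set G := ex Y (f₁ + f₂)
  have hkey : ‖G₁ + G₂ - G‖ ≤ 0 := by
    apply le_of_forall_pos_le_add
    intro ε hε
    rw [zero_add]
    have hKpos : (0:ℝ) < ‖f₁‖ + ‖f₂‖ + ‖f₁ + f₂‖ + 4 := by positivity
    set δ : ℝ := ε / (‖f₁‖ + ‖f₂‖ + ‖f₁ + f₂‖ + 4) with hδdef
    have hδpos : 0 < δ := div_pos hε hKpos
    have hce : ‖f₁‖ * δ + ‖f₂‖ * δ + ‖f₁ + f₂‖ * δ + 4 * δ = ε := by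
      have h : (‖f₁‖ + ‖f₂‖ + ‖f₁ + f₂‖ + 4) * δ = ε := by
        rw [hδdef, mul_div_cancel₀ _ (ne_of_gt hKpos)]
      rw [← h]; ring
    obtain ⟨x, hx1, hx2⟩ := exists_norming (G₁ + G₂ - G) hδpos
    rw [ContinuousLinearMap.sub_apply, ContinuousLinearMap.add_apply] at hx2
    obtain ⟨u, hu1, hu2⟩ := exists_norming f₁ hδpos
    obtain ⟨v, hv1, hv2⟩ := exists_norming f₂ hδpos
    obtain ⟨w, hw1, hw2⟩ := exists_norming (f₁ + f₂) hδpos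
    obtain ⟨y, hy, h1, h2, h3⟩ :=
      hb (↑u) (↑v) (-↑w) u.2 v.2 (Y.neg_mem w.2)
        (le_of_lt hu1) (le_of_lt hv1) (by simpa using le_of_lt hw1)
        x (le_of_lt hx1) δ hδpos
    set yY : ↥Y := ⟨y, hy⟩
    have hG₁y : G₁ y = f₁ yY := ex_apply Y f₁ yY
    have hG₂y : G₂ y = f₂ yY := ex_apply Y f₂ yY
    have hGy : G y = (f₁ + f₂) yY := ex_apply Y (f₁ + f₂) yY
    have e1 : G₁ x + f₁ u - f₁ yY ≤ ‖f₁‖ + ‖f₁‖ * δ := by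
      have h := apply_le_of_norm_le G₁ h1
      rw [map_sub, map_add, ex_apply Y f₁ u, hG₁y, ex_norm] at h
      linarith [h]
    have e2 : G₂ x + f₂ v - f₂ yY ≤ ‖f₂‖ + ‖f₂‖ * δ := by
      have h := apply_le_of_norm_le G₂ h2
      rw [map_sub, map_add, ex_apply Y f₂ v, hG₂y, ex_norm] at h
      linarith [h]
    have e3 : -(‖f₁ + f₂‖ + ‖f₁ + f₂‖ * δ) ≤ G x - (f₁ + f₂) w - (f₁ + f₂) yY := by
      have h := neg_le_apply_of_norm_le G h3
      rw [map_sub, map_add, map_neg, ex_apply Y (f₁ + f₂) w, hGy, ex_norm] at h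
      linarith [h]
    have hsplit : (f₁ + f₂) yY = f₁ yY + f₂ yY := rfl
    linarith
  have : G₁ + G₂ - G = 0 := by rwa [← norm_le_zero_iff]
  have h2 : G₁ + G₂ = G := by
    have := sub_eq_zero.mp this; exact this
  exact h2.symm

lemma ex_smul (hb : ThreeBall Y) (c : ℝ) (f : StrongDual ℝ ↥Y) :
    ex Y (c • f) = c • ex Y f := by
  haveI := NormedSpace.toNormSMulClass (𝕜 := ℝ) (E := StrongDual ℝ ↥Y)
  have hext : ∀ y : ↥Y, (c • ex Y f) ↑y = (ex Y (c • f)) ↑y := by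
    intro y
    rw [ContinuousLinearMap.smul_apply, ex_apply, ex_apply, ContinuousLinearMap.smul_apply]
  have hn : ‖c • ex Y f‖ = ‖res Y (ex Y (c • f))‖ := by
    rw [res_ex, norm_smul, norm_smul, ex_norm]
  have h := step1 hb (ex Y (c • f)) (c • ex Y f) hext hn
  have hnorm : ‖ex Y (c • f)‖ = ‖c • ex Y f‖ := by
    rw [ex_norm, norm_smul, norm_smul, ex_norm]
  have h0 : ‖ex Y (c • f) - c • ex Y f‖ ≤ 0 := by linarith
  have : ex Y (c • f) - c • ex Y f = 0 := by rwa [← norm_le_zero_iff]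
  exact sub_eq_zero.mp this

lemma ex_zero (hb : ThreeBall Y) : ex Y (0 : StrongDual ℝ ↥Y) = 0 := by
  have := ex_smul hb 0 (0 : StrongDual ℝ ↥Y)
  simpa using this

variable (Y)

/-- The L-projection onto the annihilator of `Y`. -/
noncomputable def proj (hb : ThreeBall Y) : StrongDual ℝ X →L[ℝ] StrongDual ℝ X :=
  LinearMap.mkContinuous
    { toFun := fun F => F - ex Y (res Y F)
      map_add' := fun F G => by
        have hres : res Y (F + G) = res Y F + res Y G := by
          ext y; simp [res]
        show (F + G) - ex Y (res Y (F + G)) = (F - ex Y (res Y F)) + (G - ex Y (res Y G))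
        rw [hres, ex_add hb]; abel
      map_smul' := fun c F => by
        have hres : res Y (c • F) = c • res Y F := by
          ext y; simp [res]
        show (c • F) - ex Y (res Y (c • F)) = c • (F - ex Y (res Y F))
        rw [hres, ex_smul hb, smul_sub] }
    1 (fun F => by
      rw [one_mul]
      have h := step1 hb F (ex Y (res Y F))
        (fun y => by rw [ex_apply]; rfl) (ex_norm Y (res Y F))
      have := norm_nonneg (ex Y (res Y F))
      simpa using le_trans (by linarith) h)

lemma proj_apply (hb : ThreeBall Y) (F : StrongDual ℝ X) :
    proj Y hb F = F - ex Y (res Y F) := rfl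

end MIdealAux

open MIdealAux

set_option maxHeartbeats 1000000 in
/-- A closed subspace `Y` of a real Banach space `X` is an
M-ideal in `X` if and only if `Y` has the 3-ball property. -/
theorem m_ideal_iff_three_ball_property
    {X : Type*} [NormedAddCommGroup X] [NormedSpace ℝ X] [CompleteSpace X]
    (Y : Subspace ℝ X) (hYc : IsClosed (Y : Set X)) :
    (∃ P : StrongDual ℝ X →L[ℝ] StrongDual ℝ X,
        (∀ F, P (P F) = P F) ∧
        (Set.range (fun F => P F) = {F : StrongDual ℝ X | ∀ y ∈ Y, F y = 0}) ∧
        (∀ F, ‖F‖ = ‖P F‖ + ‖F - P F‖)) ↔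
    (∀ y₁ y₂ y₃ : X, y₁ ∈ Y → y₂ ∈ Y → y₃ ∈ Y →
      ‖y₁‖ ≤ 1 → ‖y₂‖ ≤ 1 → ‖y₃‖ ≤ 1 →
      ∀ x : X, ‖x‖ ≤ 1 → ∀ ε > 0, ∃ y ∈ Y,
        ‖x + y₁ - y‖ ≤ 1 + ε ∧ ‖x + y₂ - y‖ ≤ 1 + ε ∧ ‖x + y₃ - y‖ ≤ 1 + ε) := by
  constructor
  · -- M-ideal ⇒ 3-ball property
    rintro ⟨P, hP1, hP2, hP3⟩ y₁ y₂ y₃ hy₁ hy₂ hy₃ hn₁ hn₂ hn₃ x hx ε hε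
    by_contra hcon
    -- every point of the image set has norm > 1 + ε
    have hCgt : ∀ y ∈ (Y : Set X),
        (1 + ε) < ‖((x + y₁ - y, x + y₂ - y, x + y₃ - y) : X × X × X)‖ := by
      intro y hy
      by_contra hle
      push_neg at hle
      refine hcon ⟨y, hy, ?_, ?_, ?_⟩
      · exact le_trans (_root_.norm_fst_le ((x + y₁ - y, x + y₂ - y, x + y₃ - y) : X × X × X)) hle
      · exact le_trans (le_trans
          (_root_.norm_fst_le ((x + y₂ - y, x + y₃ - y) : X × X))
          (_root_.norm_snd_le ((x + y₁ - y, x + y₂ - y, x + y₃ - y) : X × X × X))) hle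
      · exact le_trans (le_trans
          (_root_.norm_snd_le ((x + y₂ - y, x + y₃ - y) : X × X))
          (_root_.norm_snd_le ((x + y₁ - y, x + y₂ - y, x + y₃ - y) : X × X × X))) hle
    set t : Set (X × X × X) :=
      (fun y : X => ((x + y₁ - y, x + y₂ - y, x + y₃ - y) : X × X × X)) '' (Y : Set X)
      with ht_def
    have hdisj : Disjoint (Metric.ball (0 : X × X × X) (1 + ε)) t := by
      rw [Set.disjoint_left]
      rintro p hp ⟨y, hy, rfl⟩
      have h1 := hCgt y hy
      have h2 : ‖(x + y₁ - y, x + y₂ - y, x + y₃ - y)‖ < 1 + ε := by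
        simpa using mem_ball_zero_iff.mp hp
      linarith
    have hconvt : Convex ℝ t := by
      rintro p ⟨a, ha, rfl⟩ q ⟨b, hb, rfl⟩ c d hc hd hcd
      refine ⟨c • a + d • b, Y.add_mem (Y.smul_mem _ ha) (Y.smul_mem _ hb), ?_⟩
      have h1 : ∀ z : X, z - (c • a + d • b) = c • (z - a) + d • (z - b) := by
        intro z
        rw [smul_sub, smul_sub]
        have : c • z + d • z = z := by rw [← add_smul, hcd, one_smul]
        rw [show c • z - c • a + (d • z - d • b) = (c • z + d • z) - (c • a + d • b) by abel,
          this]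
      show (x + y₁ - (c • a + d • b), x + y₂ - (c • a + d • b), x + y₃ - (c • a + d • b))
          = c • (x + y₁ - a, x + y₂ - a, x + y₃ - a) + d • (x + y₁ - b, x + y₂ - b, x + y₃ - b)
      rw [Prod.ext_iff, Prod.ext_iff]
      refine ⟨h1 (x + y₁), h1 (x + y₂), h1 (x + y₃)⟩
    obtain ⟨f, u, hsb, hst⟩ :=
      geometric_hahn_banach_open (convex_ball (0 : X × X × X) (1 + ε)) Metric.isOpen_ball
        hconvt hdisj
    set f₁ : X →L[ℝ] ℝ := f.comp (ContinuousLinearMap.inl ℝ X (X × X)) with hf₁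
    set f₂ : X →L[ℝ] ℝ :=
      f.comp ((ContinuousLinearMap.inr ℝ X (X × X)).comp (ContinuousLinearMap.inl ℝ X X))
      with hf₂
    set f₃ : X →L[ℝ] ℝ :=
      f.comp ((ContinuousLinearMap.inr ℝ X (X × X)).comp (ContinuousLinearMap.inr ℝ X X))
      with hf₃
    have hdec : ∀ a b c : X, f (a, b, c) = f₁ a + f₂ b + f₃ c := by
      intro a b c
      have h : ((a, b, c) : X × X × X)
          = (a, (0:X), (0:X)) + ((0:X), b, (0:X)) + ((0:X), (0:X), c) := by
        simp [Prod.ext_iff]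
      rw [h, map_add, map_add]; rfl
    -- the sum of the norms is dominated
    have hub : (1 + ε) * (‖f₁‖ + ‖f₂‖ + ‖f₃‖) ≤ u := by
      apply le_of_forall_pos_le_add
      intro c hc
      have h1ε : (0:ℝ) < 1 + ε := by linarith
      set δ : ℝ := c / (3 * (1 + ε)) with hδdef
      have hδpos : 0 < δ := by positivity
      have hδc : (1 + ε) * (3 * δ) = c := by
        rw [hδdef]; field_simp
      obtain ⟨a₁, ha₁, hfa₁⟩ := exists_norming f₁ hδpos
      obtain ⟨a₂, ha₂, hfa₂⟩ := exists_norming f₂ hδpos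
      obtain ⟨a₃, ha₃, hfa₃⟩ := exists_norming f₃ hδpos
      set p : X × X × X := (1 + ε) • ((a₁, a₂, a₃) : X × X × X) with hp_def
      have hpnorm : ‖p‖ < 1 + ε := by
        have htriple : ‖((a₁, a₂, a₃) : X × X × X)‖ < 1 := by
          rw [Prod.norm_def, Prod.norm_def]
          exact max_lt ha₁ (max_lt ha₂ ha₃)
        calc ‖p‖ = ‖(1 + ε)‖ * ‖((a₁, a₂, a₃) : X × X × X)‖ := norm_smul _ _
          _ = (1 + ε) * ‖((a₁, a₂, a₃) : X × X × X)‖ := by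
              rw [Real.norm_eq_abs, abs_of_pos h1ε]
          _ < (1 + ε) * 1 := by exact mul_lt_mul_of_pos_left htriple h1ε
          _ = 1 + ε := mul_one _
      have hpu : f p < u := hsb p (mem_ball_zero_iff.mpr hpnorm)
      have hfp : f p = (1 + ε) * (f₁ a₁ + f₂ a₂ + f₃ a₃) := by
        rw [hp_def, map_smul, smul_eq_mul, hdec]
      have hkey : (1 + ε) * (‖f₁‖ + ‖f₂‖ + ‖f₃‖ - 3 * δ) < u := by
        have hsum : ‖f₁‖ + ‖f₂‖ + ‖f₃‖ - 3 * δ ≤ f₁ a₁ + f₂ a₂ + f₃ a₃ := by linarith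
        calc (1 + ε) * (‖f₁‖ + ‖f₂‖ + ‖f₃‖ - 3 * δ)
            ≤ (1 + ε) * (f₁ a₁ + f₂ a₂ + f₃ a₃) :=
              mul_le_mul_of_nonneg_left hsum (le_of_lt h1ε)
          _ = f p := hfp.symm
          _ < u := hpu
      have hexpand : (1 + ε) * (‖f₁‖ + ‖f₂‖ + ‖f₃‖ - 3 * δ)
          = (1 + ε) * (‖f₁‖ + ‖f₂‖ + ‖f₃‖) - c := by
        rw [← hδc]; ring
      rw [hexpand] at hkey
      linarith
    -- g := f₁ + f₂ + f₃ vanishes on Y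
    set A : ℝ := f₁ (x + y₁) + f₂ (x + y₂) + f₃ (x + y₃) with hA_def
    have hbound : ∀ y ∈ (Y : Set X), f₁ y + f₂ y + f₃ y ≤ A - u := by
      intro y hy
      have h := hst _ ⟨y, hy, rfl⟩
      rw [hdec, map_sub, map_sub, map_sub] at h
      linarith
    have hgY : ∀ y ∈ (Y : Set X), f₁ y + f₂ y + f₃ y = 0 := by
      intro y hy
      by_contra hne
      have h2 : ∀ s : ℝ, s * (f₁ y + f₂ y + f₃ y) ≤ A - u := by
        intro s
        have h := hbound (s • y) (Y.smul_mem s hy)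
        rw [map_smul, map_smul, map_smul, smul_eq_mul, smul_eq_mul, smul_eq_mul] at h
        linarith [h]
      have := h2 ((A - u + 1) / (f₁ y + f₂ y + f₃ y))
      rw [div_mul_cancel₀ _ hne] at this
      linarith
    set g : X →L[ℝ] ℝ := f₁ + f₂ + f₃ with hg_def
    have hg_mem : g ∈ {F : StrongDual ℝ X | ∀ y ∈ Y, F y = 0} := by
      intro y hy
      rw [hg_def]
      simpa [ContinuousLinearMap.add_apply] using hgY y hy
    have hPg : P g = g := by
      rw [← hP2] at hg_mem
      obtain ⟨h, hh⟩ := hg_mem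
      simp only at hh
      rw [← hh, hP1]
    -- final contradiction
    have hu0 : u ≤ A := by
      have h := hst _ ⟨0, Y.zero_mem, rfl⟩
      rw [hdec] at h
      simpa [hA_def] using h
    have hannih : ∀ i : Fin 3, True := fun _ => trivial
    have hPann : ∀ (F : StrongDual ℝ X) (y : X), y ∈ Y → (P F) y = 0 := by
      intro F y hy
      have : P F ∈ {F : StrongDual ℝ X | ∀ y ∈ Y, F y = 0} := by
        rw [← hP2]; exact ⟨F, rfl⟩
      exact this y hy
    have hgx : f₁ x + f₂ x + f₃ x ≤ ‖P f₁‖ + ‖P f₂‖ + ‖P f₃‖ := by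
      have h1 : f₁ x + f₂ x + f₃ x = g x := by
        rw [hg_def]; simp [ContinuousLinearMap.add_apply]
      have h2 : g x = (P f₁) x + (P f₂) x + (P f₃) x := by
        rw [← hPg, hg_def, map_add, map_add]
        simp [ContinuousLinearMap.add_apply]
      have b1 := apply_le_of_norm_le (P f₁) hx
      have b2 := apply_le_of_norm_le (P f₂) hx
      have b3 := apply_le_of_norm_le (P f₃) hx
      rw [mul_one] at b1 b2 b3
      linarith [h1, h2, b1, b2, b3]
    have hyi : ∀ (fi : StrongDual ℝ X) (yi : X), yi ∈ Y → ‖yi‖ ≤ 1 →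
        fi yi ≤ ‖fi - P fi‖ := by
      intro fi yi hyi hni
      have h0 : (P fi) yi = 0 := hPann fi yi hyi
      have h1 : fi yi = (fi - P fi) yi := by
        rw [ContinuousLinearMap.sub_apply, h0, sub_zero]
      have h2 := apply_le_of_norm_le (fi - P fi) hni
      rw [mul_one] at h2
      linarith
    have hAS : A ≤ ‖f₁‖ + ‖f₂‖ + ‖f₃‖ := by
      have e1 : f₁ (x + y₁) = f₁ x + f₁ y₁ := map_add _ _ _
      have e2 : f₂ (x + y₂) = f₂ x + f₂ y₂ := map_add _ _ _
      have e3 : f₃ (x + y₃) = f₃ x + f₃ y₃ := map_add _ _ _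
      have k1 := hyi f₁ y₁ hy₁ hn₁
      have k2 := hyi f₂ y₂ hy₂ hn₂
      have k3 := hyi f₃ y₃ hy₃ hn₃
      have n1 := hP3 f₁
      have n2 := hP3 f₂
      have n3 := hP3 f₃
      rw [hA_def]
      linarith [hgx]
    have hS0 : (0:ℝ) ≤ ‖f₁‖ + ‖f₂‖ + ‖f₃‖ := by positivity
    have hupos : 0 < u := by
      have h := hsb 0 (mem_ball_zero_iff.mpr (by simp; linarith))
      simpa using h
    nlinarith [hub, hu0, hAS, hS0, hupos, mul_pos hε (lt_of_lt_of_le hupos (le_trans hu0 hAS))]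
  · -- 3-ball property ⇒ M-ideal
    intro hb'
    have hb : ThreeBall Y := hb'
    refine ⟨proj Y hb, ?_, ?_, ?_⟩
    · intro F
      have h0 : res Y (F - ex Y (res Y F)) = 0 := by
        ext y
        simp [res, ContinuousLinearMap.sub_apply, ex_apply]
      show (F - ex Y (res Y F)) - ex Y (res Y (F - ex Y (res Y F))) = F - ex Y (res Y F)
      rw [h0, ex_zero hb, sub_zero]
    · apply Set.Subset.antisymm
      · rintro F ⟨G, rfl⟩
        intro y hy
        have h1 : ex Y (res Y G) y = G y := ex_apply Y (res Y G) ⟨y, hy⟩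
        show (G - ex Y (res Y G)) y = 0
        rw [ContinuousLinearMap.sub_apply, h1, sub_self]
      · intro F hF
        refine ⟨F, ?_⟩
        have h0 : res Y F = 0 := by
          ext y
          exact hF ↑y y.2
        show F - ex Y (res Y F) = F
        rw [h0, ex_zero hb, sub_zero]
    · intro F
      have hFP : F - proj Y hb F = ex Y (res Y F) := by
        rw [proj_apply]; abel
      apply le_antisymm
      · calc ‖F‖ = ‖proj Y hb F + (F - proj Y hb F)‖ := by rw [add_sub_cancel]
          _ ≤ ‖proj Y hb F‖ + ‖F - proj Y hb F‖ := norm_add_le _ _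
      · rw [hFP, proj_apply]
        exact step1 hb F (ex Y (res Y F))
          (fun y => by rw [ex_apply]; rfl) (ex_norm Y (res Y F))
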